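/- The vectors φ^1 = (ζ²e_1 + ζe_2 + e_3)/√3, φ^2 = (-e_1 + e_2 - e_3 + √(-3) e_4)/√6, φ^3 = conjugate of φ^2, φ^4 = conjugate of φ^1 (with ζ = e^{πi/3}) form a basis of C^4 of eigenvectors of the D_4 Coxeter transformation σ = R_1R_2R_3R_4 with eigenvalues ζ, ζ³, ζ³, ζ⁵ respectively, and satisfy (φ^i | φ^j) = δ_{i+j,5}, where (·|·) is the C-bilinear extension of the standard inner product on R^4. -/

import Mathlib

open Complex

/-- The reflection `R_a(x) = x - (x|a) a` in a root `a` of squared length 2,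
with respect to the standard bilinear form on `ℂ⁴`. -/
noncomputable def reflFun (a : Fin 4 → ℂ) (x : Fin 4 → ℂ) : Fin 4 → ℂ :=
  x - (∑ k, x k * a k) • a

/-- The Coxeter transformation `σ = R_1 R_2 R_3 R_4` of the `D_4` root lattice. -/
noncomputable def coxD4 : (Fin 4 → ℂ) → (Fin 4 → ℂ) :=
  fun x => reflFun ![1, -1, 0, 0]
    (reflFun ![0, 1, -1, 0]
      (reflFun ![0, 0, 1, -1]
        (reflFun ![0, 0, 1, 1] x)))

/-- `ζ = e^{πi/3}`. -/
noncomputable def zetaD4 : ℂ := Complex.exp (Real.pi * Complex.I / 3)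

/-- The eigenvectors `φ^1 = (ζ²e₁+ζe₂+e₃)/√3`, `φ^2 = (-e₁+e₂-e₃+√-3 e₄)/√6`,
`φ^3 = conj φ^2`, `φ^4 = conj φ^1` of the `D_4` Coxeter transformation. -/
noncomputable def phiD4 : Fin 4 → (Fin 4 → ℂ) :=
  ![((Real.sqrt 3 : ℂ))⁻¹ • ![zetaD4 ^ 2, zetaD4, 1, 0],
    ((Real.sqrt 6 : ℂ))⁻¹ • ![-1, 1, -1, Complex.I * Real.sqrt 3],
    fun k => (starRingEnd ℂ)
      ((((Real.sqrt 6 : ℂ))⁻¹ • ![-1, 1, -1, Complex.I * Real.sqrt 3] : Fin 4 → ℂ) k),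
    fun k => (starRingEnd ℂ)
      ((((Real.sqrt 3 : ℂ))⁻¹ • ![zetaD4 ^ 2, zetaD4, 1, 0] : Fin 4 → ℂ) k)]

lemma coxD4_apply (x : Fin 4 → ℂ) : coxD4 x = ![-(x 2), x 0, x 1, -(x 3)] := by
  funext k
  fin_cases k <;>
    simp [coxD4, reflFun, Fin.sum_univ_four, Pi.sub_apply, Pi.smul_apply, smul_eq_mul,
      Matrix.vecHead, Matrix.vecTail, show (Fin.succ 2 : Fin 4) = 3 from rfl] <;> ring

lemma zetaD4_cube : zetaD4 ^ 3 = -1 := by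
  rw [zetaD4, ← Complex.exp_nat_mul]
  have h : ((3 : ℕ) : ℂ) * ((Real.pi : ℂ) * Complex.I / 3) = Real.pi * Complex.I := by
    push_cast; ring
  rw [h, Complex.exp_pi_mul_I]

lemma zetaD4_eq : zetaD4 = (1 / 2 : ℝ) + (Real.sqrt 3 / 2 : ℝ) * Complex.I := by
  have h : (Real.pi : ℂ) * Complex.I / 3 = ((Real.pi / 3 : ℝ) : ℂ) * Complex.I := by
    push_cast; ring
  rw [zetaD4, h, Complex.exp_mul_I, ← Complex.ofReal_cos, ← Complex.ofReal_sin,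
    Real.cos_pi_div_three, Real.sin_pi_div_three]

lemma sqrt3_sq : ((Real.sqrt 3 : ℝ) : ℂ) ^ 2 = 3 := by
  norm_cast
  rw [Real.sq_sqrt]; norm_num

lemma sqrt6_sq : ((Real.sqrt 6 : ℝ) : ℂ) ^ 2 = 6 := by
  norm_cast
  rw [Real.sq_sqrt]; norm_num

lemma sqrt3_ne : ((Real.sqrt 3 : ℝ) : ℂ) ≠ 0 := by
  simp [Real.sqrt_eq_zero']

lemma sqrt6_ne : ((Real.sqrt 6 : ℝ) : ℂ) ≠ 0 := by
  simp [Real.sqrt_eq_zero']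

lemma zetaD4_sq : zetaD4 ^ 2 = zetaD4 - 1 := by
  rw [zetaD4_eq]
  push_cast
  linear_combination (Complex.I ^ 2 / 4) * sqrt3_sq + (3 / 4) * Complex.I_sq

lemma zetaD4_conj : (starRingEnd ℂ) zetaD4 = -zetaD4 ^ 2 := by
  rw [zetaD4_eq]
  push_cast
  simp only [map_add, map_mul, map_div₀, map_one, map_ofNat, Complex.conj_ofReal, Complex.conj_I]
  linear_combination (Complex.I ^ 2 / 4) * sqrt3_sq + (3 / 4) * Complex.I_sq


set_option maxHeartbeats 2000000 in
/-- The vectors `φ^1, …, φ^4` form a basis of `ℂ⁴` of eigenvectors of the `D_4`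
Coxeter transformation with eigenvalues `ζ, ζ³, ζ³, ζ⁵`, and satisfy
`(φ^i | φ^j) = δ_{i+j,5}` for the bilinear extension of the standard inner
product. -/
theorem phiD4_eigenbasis :
    LinearIndependent ℂ phiD4 ∧
    (∀ j, coxD4 (phiD4 j) = zetaD4 ^ (![1, 3, 3, 5] j) • phiD4 j) ∧
    (∀ i j : Fin 4, (∑ k, phiD4 i k * phiD4 j k) =
      if ((i : ℕ) + 1) + ((j : ℕ) + 1) = 5 then 1 else 0) := by
  have hP : ∀ i j : Fin 4, (∑ k, phiD4 i k * phiD4 j k) =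
      if ((i : ℕ) + 1) + ((j : ℕ) + 1) = 5 then 1 else 0 := by
    intro i j
    fin_cases i <;> fin_cases j <;>
      simp [phiD4, Fin.sum_univ_four, map_mul, map_inv₀, map_neg, map_one, map_pow,
        Complex.conj_ofReal, Complex.conj_I, zetaD4_conj] <;>
      (field_simp [sqrt3_ne, sqrt6_ne]
       all_goals first
        | linear_combination (zetaD4 ^ 2 + zetaD4 + 1) * zetaD4_sq
        | linear_combination (-(((Real.sqrt 3 : ℝ) : ℂ) ^ 2 * ((Real.sqrt 6 : ℝ) : ℂ) ^ 2)) *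
            zetaD4_sq
        | linear_combination (zetaD4 ^ 3 - 2) * zetaD4_cube - sqrt3_sq
        | linear_combination Complex.I ^ 2 * sqrt3_sq + 3 * Complex.I_sq
        | linear_combination (-Complex.I ^ 2) * sqrt3_sq - 3 * Complex.I_sq - sqrt6_sq
        | linear_combination (-(((Real.sqrt 3 : ℝ) : ℂ) ^ 2 * ((Real.sqrt 6 : ℝ) : ℂ) ^ 2) *
            (zetaD4 ^ 2 + zetaD4 + 1)) * zetaD4_sq
        | linear_combination (zetaD4 ^ 2 + zetaD4 + 1) * (zetaD4 ^ 4 - zetaD4 ^ 2 + 1) *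
            zetaD4_sq
        | linear_combination (-1 : ℂ) * zetaD4_sq
        | linear_combination (-(zetaD4 ^ 2 + zetaD4 + 1)) * zetaD4_sq)
  have hE : ∀ j, coxD4 (phiD4 j) = zetaD4 ^ (![1, 3, 3, 5] j) • phiD4 j := by
    intro j
    fin_cases j <;> (rw [coxD4_apply]; funext k; fin_cases k) <;>
      simp [phiD4, map_mul, map_inv₀, map_neg, map_one, map_pow,
        Complex.conj_ofReal, Complex.conj_I, zetaD4_conj] <;>
      (field_simp [sqrt3_ne, sqrt6_ne]
       all_goals first
        | linear_combination zetaD4_cube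
        | linear_combination (-1 : ℂ) * zetaD4_cube
        | linear_combination (Complex.I * ((Real.sqrt 3 : ℝ) : ℂ)) * zetaD4_cube
        | linear_combination (-(Complex.I * ((Real.sqrt 3 : ℝ) : ℂ) * ((Real.sqrt 6 : ℝ) : ℂ))) *
            zetaD4_cube
        | linear_combination (Complex.I * ((Real.sqrt 3 : ℝ) : ℂ) * ((Real.sqrt 6 : ℝ) : ℂ)) *
            zetaD4_cube
        | linear_combination (-(zetaD4 ^ 6 - zetaD4 ^ 3 + 1)) * zetaD4_cube
        | linear_combination zetaD4 ^ 4 * zetaD4_cube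
        | linear_combination (-(zetaD4 ^ 2 * ((Real.sqrt 3 : ℝ) : ℂ))) * zetaD4_cube
        | linear_combination (zetaD4 ^ 2 * ((Real.sqrt 3 : ℝ) : ℂ)) * zetaD4_cube
        | linear_combination (-zetaD4 ^ 2) * zetaD4_cube
        | ring)
  refine ⟨?_, hE, hP⟩
  rw [Fintype.linearIndependent_iff]
  intro g hg
  have h2 : ∀ m : Fin 4, ∑ jj : Fin 4, g jj * ∑ k, phiD4 jj k * phiD4 m k = 0 := by
    intro m
    have h0 := congrArg (fun v : Fin 4 → ℂ => ∑ k, v k * phiD4 m k) hg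
    simp only [Finset.sum_apply, Pi.smul_apply, smul_eq_mul, Pi.zero_apply, zero_mul,
      Finset.sum_const_zero] at h0
    calc ∑ jj : Fin 4, g jj * ∑ k, phiD4 jj k * phiD4 m k
        = ∑ jj : Fin 4, ∑ k, g jj * phiD4 jj k * phiD4 m k := by
          simp only [Finset.mul_sum, mul_assoc]
      _ = ∑ k, ∑ jj : Fin 4, g jj * phiD4 jj k * phiD4 m k := Finset.sum_comm
      _ = ∑ k, (∑ jj : Fin 4, g jj * phiD4 jj k) * phiD4 m k := by
          simp only [Finset.sum_mul]
      _ = 0 := h0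
  intro i
  fin_cases i
  · have h := h2 3
    simp [hP, Fin.sum_univ_four, show ((3 : Fin 4) : ℕ) = 3 from rfl,
      show ((2 : Fin 4) : ℕ) = 2 from rfl, show ((1 : Fin 4) : ℕ) = 1 from rfl,
      show ((0 : Fin 4) : ℕ) = 0 from rfl] at h
    simpa using h
  · have h := h2 2
    simp [hP, Fin.sum_univ_four, show ((3 : Fin 4) : ℕ) = 3 from rfl,
      show ((2 : Fin 4) : ℕ) = 2 from rfl, show ((1 : Fin 4) : ℕ) = 1 from rfl,
      show ((0 : Fin 4) : ℕ) = 0 from rfl] at h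
    simpa using h
  · have h := h2 1
    simp [hP, Fin.sum_univ_four, show ((3 : Fin 4) : ℕ) = 3 from rfl,
      show ((2 : Fin 4) : ℕ) = 2 from rfl, show ((1 : Fin 4) : ℕ) = 1 from rfl,
      show ((0 : Fin 4) : ℕ) = 0 from rfl] at h
    simpa using h
  · have h := h2 0
    simp [hP, Fin.sum_univ_four, show ((3 : Fin 4) : ℕ) = 3 from rfl,
      show ((2 : Fin 4) : ℕ) = 2 from rfl, show ((1 : Fin 4) : ℕ) = 1 from rfl,
      show ((0 : Fin 4) : ℕ) = 0 from rfl] at h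
    simpa using h
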